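/- Let (P^{(n)}_t)_{t≥0}, n ≥ 1, be families of Markov kernels on ℝⁿ. Suppose ψ = (ψ_{s,t})_{s≤t} on a probability space (Ω,F,P) and ψ̃ = (ψ̃_{s,t})_{s≤t} on a probability space (Ω̃,F̃,P̃) are two stochastic flows of mappings generated by the same kernels, i.e. each family consists of jointly measurable maps Ω × ℝ → ℝ satisfying: (SF2) for all r ≤ s ≤ t and x ∈ ℝ, P(ψ_{s,t}(ψ_{r,s}(x)) = ψ_{r,t}(x)) = 1; and (SF3) with F^ψ_s = σ(ψ_{p,q}(x) : p ≤ q ≤ s, x ∈ ℝ), for every s ≤ t, every n ≥ 1, every F^ψ_s-measurable ℝⁿ-valued random vector ξ and Borel B ⊆ ℝⁿ, P(ψ_{s,t}(ξ) ∈ B | F^ψ_s) = P^{(n)}_{t−s}(ξ,B) a.s. (and likewise for ψ̃). Then ψ and ψ̃ have the same finite-dimensional distributions: for all n, l ≥ 1, all times t₁ ≤ t₂ ≤ … ≤ tₙ and all points x₁,…,x_l ∈ ℝ, the joint law under P of the family (ψ_{t_i,t_j}(x_k))_{1≤i<j≤n, 1≤k≤l} equals the joint law under P̃ of (ψ̃_{t_i,t_j}(x_k))_{1≤i<j≤n,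 1≤k≤l}. -/

import Mathlib

open MeasureTheory ProbabilityTheory

/-- The "past" σ-field `F^ψ_s = σ(ψ_{p,q}(x) : p ≤ q ≤ s, x ∈ ℝ)`. -/
def pastSigma {Ω : Type*} (ψ : ℝ → ℝ → Ω → ℝ → ℝ) (s : ℝ) : MeasurableSpace Ω :=
  ⨆ (p : ℝ) (q : ℝ) (_ : p ≤ q) (_ : q ≤ s) (x : ℝ),
    MeasurableSpace.comap (fun ω => ψ p q ω x) inferInstance

/-- A stochastic flow of mappings generated by the kernels `K`: jointly measurable
maps `ψ_{s,t}` (for `s ≤ t`) satisfying the weak flow property SF2 and the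
conditional-increment property SF3. -/
structure IsStochasticFlow {Ω : Type*} [MeasurableSpace Ω] (μ : Measure Ω)
    (K : (n : ℕ) → ℝ → Kernel (Fin n → ℝ) (Fin n → ℝ))
    (ψ : ℝ → ℝ → Ω → ℝ → ℝ) : Prop where
  -- SF1: joint measurability
  meas : ∀ s t : ℝ, s ≤ t → Measurable (fun q : Ω × ℝ => ψ s t q.1 q.2)
  -- SF2: weak flow property
  sf2 : ∀ r s t : ℝ, r ≤ s → s ≤ t → ∀ x : ℝ,
    μ {ω | ψ s t ω (ψ r s ω x) = ψ r t ω x} = 1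
  -- SF3: conditional distribution of increments
  sf3 : ∀ s t : ℝ, s ≤ t → ∀ n : ℕ, 0 < n → ∀ ξ : Ω → Fin n → ℝ,
    Measurable[pastSigma ψ s] ξ →
    ∀ B : Set (Fin n → ℝ), MeasurableSet B →
    (μ[Set.indicator {ω' | (fun i => ψ s t ω' (ξ ω' i)) ∈ B} (fun _ => (1 : ℝ))
        | pastSigma ψ s])
      =ᵐ[μ] fun ω => (K n (t - s) (ξ ω) B).toReal

namespace StochFlowAux

variable {Ω : Type*} [MeasurableSpace Ω] {μ : Measure Ω}
  {K : (n : ℕ) → ℝ → Kernel (Fin n → ℝ) (Fin n → ℝ)}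
  {ψ : ℝ → ℝ → Ω → ℝ → ℝ}

lemma measurable_psi (hψ : IsStochasticFlow μ K ψ) {s t : ℝ} (hst : s ≤ t) (x : ℝ) :
    Measurable (fun ω => ψ s t ω x) :=
  (hψ.meas s t hst).comp (measurable_id.prodMk measurable_const)

lemma pastSigma_le (hψ : IsStochasticFlow μ K ψ) (s : ℝ) :
    pastSigma ψ s ≤ ‹MeasurableSpace Ω› := by
  refine iSup_le fun p => iSup_le fun q => iSup_le fun hpq => iSup_le fun hqs =>
    iSup_le fun x => ?_
  exact measurable_iff_comap_le.mp (measurable_psi hψ hpq x)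

lemma measurable_past_psi {s p q : ℝ} (hpq : p ≤ q) (hqs : q ≤ s) (x : ℝ) :
    Measurable[pastSigma ψ s] (fun ω => ψ p q ω x) := by
  rw [measurable_iff_comap_le]
  exact le_iSup_of_le p (le_iSup_of_le q (le_iSup_of_le hpq (le_iSup_of_le hqs
    (le_iSup_of_le x le_rfl))))

lemma sf2_ae [IsProbabilityMeasure μ] (hψ : IsStochasticFlow μ K ψ) {r s t : ℝ}
    (hrs : r ≤ s) (hst : s ≤ t) (x : ℝ) :
    ∀ᵐ ω ∂μ, ψ s t ω (ψ r s ω x) = ψ r t ω x := by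
  have h1 : Measurable (fun ω => ψ s t ω (ψ r s ω x)) :=
    (hψ.meas s t hst).comp (measurable_id.prodMk (measurable_psi hψ hrs x))
  have hS : MeasurableSet {ω | ψ s t ω (ψ r s ω x) = ψ r t ω x} :=
    measurableSet_eq_fun h1 (measurable_psi hψ (hrs.trans hst) x)
  have h := hψ.sf2 r s t hrs hst x
  refine ae_iff.2 ?_
  have hc : {ω | ¬ ψ s t ω (ψ r s ω x) = ψ r t ω x}
      = {ω | ψ s t ω (ψ r s ω x) = ψ r t ω x}ᶜ := rfl
  rw [hc, measure_compl hS (measure_ne_top μ _), h, measure_univ]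
  simp

/-- Key consequence of SF3: the joint law of a past-measurable random variable and the
flow applied to a past-measurable vector is the composition of their joint law with the
kernel. -/
lemma flow_step [IsProbabilityMeasure μ] [∀ n t, IsMarkovKernel (K n t)]
    (hψ : IsStochasticFlow μ K ψ) {E : Type*} [MeasurableSpace E]
    {s t : ℝ} (hst : s ≤ t) {N : ℕ} (hN : 0 < N)
    {η : Ω → E} (hη : Measurable[pastSigma ψ s] η)
    {ξ : Ω → Fin N → ℝ} (hξ : Measurable[pastSigma ψ s] ξ) :
    μ.map (fun ω => (η ω, fun i => ψ s t ω (ξ ω i)))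
      = ((μ.map (fun ω => (η ω, ξ ω))) ⊗ₘ
          ((K N (t - s)).comap Prod.snd measurable_snd)).map (fun p => (p.1.1, p.2)) := by
  have hG := pastSigma_le hψ s
  have hηm : Measurable η := hη.mono hG le_rfl
  have hξm : Measurable ξ := hξ.mono hG le_rfl
  have hYm : Measurable (fun ω => fun i => ψ s t ω (ξ ω i)) :=
    measurable_pi_lambda _ fun i =>
      (hψ.meas s t hst).comp (measurable_id.prodMk ((measurable_pi_apply i).comp hξm))
  have hpair1 : Measurable (fun ω => (η ω, fun i => ψ s t ω (ξ ω i))) := hηm.prodMk hYm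
  have hpair2 : Measurable (fun ω => (η ω, ξ ω)) := hηm.prodMk hξm
  set κ : Kernel (E × (Fin N → ℝ)) (Fin N → ℝ) :=
    (K N (t - s)).comap Prod.snd measurable_snd with hκdef
  have hπ : Measurable (fun p : (E × (Fin N → ℝ)) × (Fin N → ℝ) => (p.1.1, p.2)) :=
    (measurable_fst.comp measurable_fst).prodMk measurable_snd
  haveI : IsProbabilityMeasure (μ.map (fun ω => (η ω, ξ ω))) :=
    Measure.isProbabilityMeasure_map hpair2.aemeasurable
  haveI : IsProbabilityMeasure (μ.map (fun ω => (η ω, fun i => ψ s t ω (ξ ω i)))) :=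
    Measure.isProbabilityMeasure_map hpair1.aemeasurable
  haveI : IsProbabilityMeasure (((μ.map (fun ω => (η ω, ξ ω))) ⊗ₘ κ).map
      (fun p => (p.1.1, p.2))) := Measure.isProbabilityMeasure_map hπ.aemeasurable
  refine ext_of_generate_finite _ generateFrom_prod.symm isPiSystem_prod ?_ (by simp)
  rintro S hS
  obtain ⟨C, hC, B, hB, rfl⟩ := hS
  replace hC : MeasurableSet C := hC
  replace hB : MeasurableSet B := hB
  have hSB : MeasurableSet ((fun ω => fun i => ψ s t ω (ξ ω i)) ⁻¹' B) := hYm hB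
  have hA : MeasurableSet (η ⁻¹' C) := hηm hC
  have hAG : MeasurableSet[pastSigma ψ s] (η ⁻¹' C) := hη hC
  rw [Measure.map_apply hpair1 (hC.prod hB), Measure.map_apply hπ (hC.prod hB)]
  have hpre : (fun p : (E × (Fin N → ℝ)) × (Fin N → ℝ) => (p.1.1, p.2)) ⁻¹' (C ×ˢ B)
      = (C ×ˢ (Set.univ : Set (Fin N → ℝ))) ×ˢ B := by
    ext p; simp [Set.mem_prod]
  rw [hpre, Measure.compProd_apply_prod (hC.prod MeasurableSet.univ) hB,
    setLIntegral_map (hC.prod MeasurableSet.univ) (Kernel.measurable_coe κ hB) hpair2]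
  have hpre2 : (fun ω => (η ω, ξ ω)) ⁻¹' (C ×ˢ (Set.univ : Set (Fin N → ℝ))) = η ⁻¹' C := by
    ext ω; simp
  rw [hpre2, Set.mk_preimage_prod]
  have hκap : (fun ω => κ (η ω, ξ ω) B) = fun ω => K N (t - s) (ξ ω) B := by
    funext ω; rw [hκdef, Kernel.comap_apply]
  rw [hκap]
  -- goal : μ (η ⁻¹' C ∩ Y ⁻¹' B) = ∫⁻ ω in η ⁻¹' C, K N (t-s) (ξ ω) B ∂μ
  have h3 := hψ.sf3 s t hst N hN ξ hξ B hB
  have hfint : Integrable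
      (Set.indicator {ω' | (fun i => ψ s t ω' (ξ ω' i)) ∈ B} (fun _ => (1 : ℝ))) μ :=
    (integrable_const 1).indicator hSB
  have h4 := setIntegral_condExp hG hfint hAG
  have h5 : ∫ ω in η ⁻¹' C,
        (μ[Set.indicator {ω' | (fun i => ψ s t ω' (ξ ω' i)) ∈ B} (fun _ => (1 : ℝ))
          | pastSigma ψ s]) ω ∂μ
      = ∫ ω in η ⁻¹' C, (K N (t - s) (ξ ω) B).toReal ∂μ :=
    integral_congr_ae (ae_restrict_of_ae h3)
  have hsetEq : {ω' | (fun i => ψ s t ω' (ξ ω' i)) ∈ B}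
      = (fun ω => fun i => ψ s t ω (ξ ω i)) ⁻¹' B := rfl
  have h6 : ∫ ω in η ⁻¹' C,
        Set.indicator {ω' | (fun i => ψ s t ω' (ξ ω' i)) ∈ B} (fun _ => (1 : ℝ)) ω ∂μ
      = (μ ((fun ω => fun i => ψ s t ω (ξ ω i)) ⁻¹' B ∩ η ⁻¹' C)).toReal := by
    rw [hsetEq, integral_indicator hSB, setIntegral_const, measureReal_def, Measure.restrict_apply hSB]
    simp
  have hKmeas : Measurable (fun ω => K N (t - s) (ξ ω) B) :=
    (Kernel.measurable_coe (K N (t - s)) hB).comp hξm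
  have h7 : ∫ ω in η ⁻¹' C, (K N (t - s) (ξ ω) B).toReal ∂μ
      = (∫⁻ ω in η ⁻¹' C, K N (t - s) (ξ ω) B ∂μ).toReal :=
    integral_toReal hKmeas.aemeasurable.restrict
      (Filter.Eventually.of_forall fun ω => measure_lt_top _ _)
  have hlintne : ∫⁻ ω in η ⁻¹' C, K N (t - s) (ξ ω) B ∂μ ≠ ⊤ := by
    refine ne_of_lt (lt_of_le_of_lt ?_ (lt_of_le_of_lt (le_refl (μ (η ⁻¹' C)))
      (measure_lt_top μ _)))
    calc ∫⁻ ω in η ⁻¹' C, K N (t - s) (ξ ω) B ∂μ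
        ≤ ∫⁻ _ in η ⁻¹' C, 1 ∂μ := lintegral_mono fun ω => prob_le_one
      _ = μ (η ⁻¹' C) := by rw [lintegral_one, Measure.restrict_apply_univ]
  have hmune : μ ((fun ω => fun i => ψ s t ω (ξ ω i)) ⁻¹' B ∩ η ⁻¹' C) ≠ ⊤ :=
    measure_ne_top μ _
  have hkey : (μ ((fun ω => fun i => ψ s t ω (ξ ω i)) ⁻¹' B ∩ η ⁻¹' C)).toReal
      = (∫⁻ ω in η ⁻¹' C, K N (t - s) (ξ ω) B ∂μ).toReal :=
    (h6.symm.trans (h4.symm.trans h5)).trans h7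
  rw [Set.inter_comm]
  exact (ENNReal.toReal_eq_toReal_iff' hmune hlintne).mp hkey

/-- The state space of the family of increments. -/
abbrev Fam (n l : ℕ) := Fin n → Fin n → Fin l → ℝ

/-- Partial families of increments: the entry `(i,j,k)` carries `ψ_{t_i,t_j}(x_k)` once the
step counter `m` exceeds `2 j` (off-diagonal, `i < j`) resp. `2 j + 1` (diagonal `i = j`). -/
def gfam (ψ : ℝ → ℝ → Ω → ℝ → ℝ) (n l : ℕ) (t : Fin n → ℝ) (x : Fin l → ℝ) (m : ℕ)
    (ω : Ω) : Fam n l :=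
  fun i j k => if 2 * (j : ℕ) + (if i = j then 1 else 0) < m ∧ i ≤ j
    then ψ (t i) (t j) ω (x k) else 0

lemma measurable_gfam_past {n l : ℕ} (t : Fin n → ℝ) (x : Fin l → ℝ) (m : ℕ) {s : ℝ}
    (hts : ∀ i j : Fin n, 2 * (j : ℕ) + (if i = j then 1 else 0) < m → i ≤ j →
      t i ≤ t j ∧ t j ≤ s) :
    Measurable[pastSigma ψ s] (gfam ψ n l t x m) := by
  letI : MeasurableSpace Ω := pastSigma ψ s
  refine measurable_pi_lambda _ fun i => measurable_pi_lambda _ fun j =>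
    measurable_pi_lambda _ fun k => ?_
  by_cases hc : 2 * (j : ℕ) + (if i = j then 1 else 0) < m ∧ i ≤ j
  · have he : (fun ω => gfam ψ n l t x m ω i j k) = fun ω => ψ (t i) (t j) ω (x k) := by
      funext ω; simp only [gfam, if_pos hc]
    rw [he]
    exact measurable_past_psi (hts i j hc.1 hc.2).1 (hts i j hc.1 hc.2).2 (x k)
  · have he : (fun ω => gfam ψ n l t x m ω i j k) = fun _ => 0 := by
      funext ω; simp only [gfam, if_neg hc]
    rw [he]
    exact measurable_const

lemma measurable_gfam (hψ : IsStochasticFlow μ K ψ) {n l : ℕ} {t : Fin n → ℝ}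
    (ht : Monotone t) (x : Fin l → ℝ) (m : ℕ) :
    Measurable (gfam ψ n l t x m) := by
  refine measurable_pi_lambda _ fun i => measurable_pi_lambda _ fun j =>
    measurable_pi_lambda _ fun k => ?_
  by_cases hc : 2 * (j : ℕ) + (if i = j then 1 else 0) < m ∧ i ≤ j
  · have he : (fun ω => gfam ψ n l t x m ω i j k) = fun ω => ψ (t i) (t j) ω (x k) := by
      funext ω; simp only [gfam, if_pos hc]
    rw [he]
    exact measurable_psi hψ (ht hc.2) (x k)
  · have he : (fun ω => gfam ψ n l t x m ω i j k) = fun _ => 0 := by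
      funext ω; simp only [gfam, if_neg hc]
    rw [he]
    exact measurable_const

lemma gfam_succ_eq (ψ : ℝ → ℝ → Ω → ℝ → ℝ) (n l : ℕ) (t : Fin n → ℝ) (x : Fin l → ℝ) (m : ℕ)
    (h : ∀ i j : Fin n, i ≤ j → 2 * (j : ℕ) + (if i = j then 1 else 0) ≠ m) :
    gfam ψ n l t x (m + 1) = gfam ψ n l t x m := by
  funext ω i j k
  simp only [gfam]
  by_cases hij : i ≤ j
  · have hne := h i j hij
    have h2 : (2 * (j : ℕ) + (if i = j then 1 else 0) < m + 1 ∧ i ≤ j)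
        ↔ (2 * (j : ℕ) + (if i = j then 1 else 0) < m ∧ i ≤ j) := by
      constructor <;> rintro ⟨h1, _⟩ <;> exact ⟨by omega, hij⟩
    exact if_congr h2 rfl rfl
  · rw [if_neg (fun hh => hij hh.2), if_neg (fun hh => hij hh.2)]

/-- The measure transform realizing one step of the induction; it depends only on the
kernels and the deterministic data. -/
noncomputable def stepCore (K : (n : ℕ) → ℝ → Kernel (Fin n → ℝ) (Fin n → ℝ)) (n l : ℕ)
    (Ξ : Fam n l → Fin (n * l) → ℝ) (dt : ℝ) (Φ : Fam n l × (Fin (n * l) → ℝ) → Fam n l) :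
    Measure (Fam n l) → Measure (Fam n l) := fun ρ =>
  (((ρ.map (fun e => (e, Ξ e))) ⊗ₘ ((K (n * l) dt).comap Prod.snd measurable_snd)).map
    (fun p => (p.1.1, p.2))).map Φ

lemma stepCore_eq [IsProbabilityMeasure μ] [∀ n t, IsMarkovKernel (K n t)]
    (hψ : IsStochasticFlow μ K ψ) {n l : ℕ} (hnl : 0 < n * l)
    {s tt : ℝ} (hst : s ≤ tt)
    {g g' : Ω → Fam n l} (hg : Measurable[pastSigma ψ s] g)
    {Ξ : Fam n l → Fin (n * l) → ℝ} (hΞ : Measurable Ξ)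
    {Φ : Fam n l × (Fin (n * l) → ℝ) → Fam n l} (hΦ : Measurable Φ)
    (heq : ∀ᵐ ω ∂μ, g' ω = Φ (g ω, fun a => ψ s tt ω (Ξ (g ω) a))) :
    μ.map g' = stepCore K n l Ξ (tt - s) Φ (μ.map g) := by
  have hG := pastSigma_le hψ s
  have hgm : Measurable g := hg.mono hG le_rfl
  have hξG : Measurable[pastSigma ψ s] (fun ω => Ξ (g ω)) := hΞ.comp hg
  have hξm : Measurable (fun ω => Ξ (g ω)) := hΞ.comp hgm
  have hYm : Measurable (fun ω => fun a => ψ s tt ω (Ξ (g ω) a)) :=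
    measurable_pi_lambda _ fun a =>
      (hψ.meas s tt hst).comp (measurable_id.prodMk ((measurable_pi_apply a).comp hξm))
  rw [Measure.map_congr heq]
  have h0 : μ.map (fun ω => Φ (g ω, fun a => ψ s tt ω (Ξ (g ω) a)))
      = (μ.map (fun ω => (g ω, fun a => ψ s tt ω (Ξ (g ω) a)))).map Φ :=
    (Measure.map_map hΦ (hgm.prodMk hYm)).symm
  have h1 : μ.map (fun ω => (g ω, fun a => ψ s tt ω (Ξ (g ω) a)))
      = ((μ.map (fun ω => (g ω, Ξ (g ω)))) ⊗ₘ
          ((K (n * l) (tt - s)).comap Prod.snd measurable_snd)).map (fun p => (p.1.1, p.2)) :=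
    flow_step hψ hst hnl hg hξG
  have hpm : Measurable (fun e : StochFlowAux.Fam n l => (e, Ξ e)) :=
    measurable_id.prodMk hΞ
  have h2 : μ.map (fun ω => (g ω, Ξ (g ω))) = (μ.map g).map (fun e => (e, Ξ e)) := by
    rw [Measure.map_map hpm hgm]; rfl
  rw [h0, h1, h2, stepCore]

end StochFlowAux

open StochFlowAux

section Steps

variable {K : (n : ℕ) → ℝ → Kernel (Fin n → ℝ) (Fin n → ℝ)}

/-- Even step `m = 2 j₀ → m + 1`: add the off-diagonal entries `ψ_{t_i, t_{j₀}}(x_k)`,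
`i < j₀`, by conditioning at time `t_{j₀ - 1}`. -/
lemma gfam_step_even {Ω : Type*} [MeasurableSpace Ω] (μ : Measure Ω) [IsProbabilityMeasure μ]
    [∀ n t, IsMarkovKernel (K n t)]
    (ψ : ℝ → ℝ → Ω → ℝ → ℝ) (hψ : IsStochasticFlow μ K ψ)
    {n l : ℕ} (t : Fin n → ℝ) (ht : Monotone t) (x : Fin l → ℝ)
    (j₀ : ℕ) (hj1 : 0 < j₀) (hjn : j₀ < n) (hl : 0 < l) :
    μ.map (gfam ψ n l t x (2 * j₀ + 1)) =
      stepCore K n l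
        (fun e a => if (finProdFinEquiv.symm a).1 ≤ (⟨j₀ - 1, by omega⟩ : Fin n)
          then e (finProdFinEquiv.symm a).1 ⟨j₀ - 1, by omega⟩ (finProdFinEquiv.symm a).2
          else x (finProdFinEquiv.symm a).2)
        (t ⟨j₀, hjn⟩ - t (⟨j₀ - 1, by omega⟩ : Fin n))
        (fun p i j k => if j = (⟨j₀, hjn⟩ : Fin n) ∧ i < j
          then p.2 (finProdFinEquiv (i, k)) else p.1 i j k)
        (μ.map (gfam ψ n l t x (2 * j₀))) := by
  set J : Fin n := ⟨j₀, hjn⟩ with hJ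
  set Jp : Fin n := ⟨j₀ - 1, by omega⟩ with hJp
  have hJpJ : Jp ≤ J := by simp only [hJ, hJp, Fin.mk_le_mk]; omega
  have hst : t Jp ≤ t J := ht hJpJ
  refine stepCore_eq hψ (Nat.mul_pos (by omega) hl) hst ?_ ?_ ?_ ?_
  · -- past-measurability of gfam (2 j₀) w.r.t. pastSigma ψ (t Jp)
    refine measurable_gfam_past t x _ fun i j hcond hij => ⟨ht hij, ht ?_⟩
    simp only [hJp, Fin.le_def]
    omega
  · -- measurability of Ξ
    refine measurable_pi_lambda _ fun a => ?_
    by_cases h : (finProdFinEquiv.symm a).1 ≤ Jp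
    · have he : (fun e : StochFlowAux.Fam n l =>
          if (finProdFinEquiv.symm a).1 ≤ Jp
          then e (finProdFinEquiv.symm a).1 Jp (finProdFinEquiv.symm a).2
          else x (finProdFinEquiv.symm a).2)
          = fun e : StochFlowAux.Fam n l =>
            e (finProdFinEquiv.symm a).1 Jp (finProdFinEquiv.symm a).2 :=
        funext fun e => if_pos h
      rw [he]
      exact (measurable_pi_apply _).comp ((measurable_pi_apply _).comp (measurable_pi_apply _))
    · have he : (fun e : StochFlowAux.Fam n l =>
          if (finProdFinEquiv.symm a).1 ≤ Jp
          then e (finProdFinEquiv.symm a).1 Jp (finProdFinEquiv.symm a).2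
          else x (finProdFinEquiv.symm a).2)
          = fun _ => x (finProdFinEquiv.symm a).2 :=
        funext fun e => if_neg h
      rw [he]
      exact measurable_const
  · -- measurability of Φ
    refine measurable_pi_lambda _ fun i => measurable_pi_lambda _ fun j =>
      measurable_pi_lambda _ fun k => ?_
    by_cases h : j = J ∧ i < j
    · have he : (fun p : StochFlowAux.Fam n l × (Fin (n * l) → ℝ) =>
          if j = J ∧ i < j then p.2 (finProdFinEquiv (i, k)) else p.1 i j k)
          = fun p => p.2 (finProdFinEquiv (i, k)) := funext fun p => if_pos h
      rw [he]
      exact (measurable_pi_apply _).comp measurable_snd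
    · have he : (fun p : StochFlowAux.Fam n l × (Fin (n * l) → ℝ) =>
          if j = J ∧ i < j then p.2 (finProdFinEquiv (i, k)) else p.1 i j k)
          = fun p => p.1 i j k := funext fun p => if_neg h
      rw [he]
      exact measurable_fst.eval.eval.eval
  · -- the a.e. identity
    have hae : ∀ᵐ ω ∂μ, ∀ (i : Fin n) (k : Fin l), (i : ℕ) < j₀ →
        ψ (t Jp) (t J) ω (ψ (t i) (t Jp) ω (x k)) = ψ (t i) (t J) ω (x k) := by
      rw [ae_all_iff]
      intro i
      rw [ae_all_iff]
      intro k
      by_cases hi : (i : ℕ) < j₀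
      · have hiJp : i ≤ Jp := by simp only [hJp, Fin.le_def]; omega
        filter_upwards [sf2_ae hψ (ht hiJp) hst (x k)] with ω h _
        exact h
      · filter_upwards with ω h
        exact absurd h hi
    filter_upwards [hae] with ω hω
    funext i j k
    simp only [gfam, Equiv.symm_apply_apply]
    by_cases hc : j = J ∧ i < j
    · obtain ⟨hj, hij⟩ := hc
      have hiv : (i : ℕ) < j₀ := by
        have := hij
        rw [hj] at this
        simpa [hJ, Fin.lt_def] using this
      have hne : i ≠ j := Fin.ne_of_lt hij
      have hiJp : i ≤ Jp := by simp only [hJp, Fin.le_def]; omega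
      rw [if_pos ⟨by simp only [hne, if_false]; subst hj; simp only [hJ]; omega, le_of_lt hij⟩]
      rw [if_pos ⟨hj, hij⟩, if_pos hiJp]
      have hiJp' : i = Jp ∨ i ≠ Jp := em _
      have hgfam : (if 2 * (Jp : ℕ) + (if i = Jp then 1 else 0) < 2 * j₀ ∧ i ≤ Jp
          then ψ (t i) (t Jp) ω (x k) else 0) = ψ (t i) (t Jp) ω (x k) := by
        refine if_pos ⟨?_, hiJp⟩
        by_cases hiJ : i = Jp
        · rw [if_pos hiJ]; have : (Jp : ℕ) = j₀ - 1 := rfl; omega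
        · rw [if_neg hiJ]; have : (Jp : ℕ) = j₀ - 1 := rfl; omega
      rw [hgfam, hω i k hiv, hj]
    · rw [if_neg hc]
      have h2 : (2 * (j : ℕ) + (if i = j then 1 else 0) < 2 * j₀ + 1 ∧ i ≤ j)
          ↔ (2 * (j : ℕ) + (if i = j then 1 else 0) < 2 * j₀ ∧ i ≤ j) := by
        constructor <;> rintro ⟨h1, hij⟩ <;> refine ⟨?_, hij⟩
        · by_cases hij2 : i = j
          · simp only [hij2, if_true] at h1 ⊢
            omega
          · simp only [hij2, if_false] at h1 ⊢
            have hlt : i < j := lt_of_le_of_ne hij hij2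
            have : (j : ℕ) ≠ j₀ := by
              intro hh
              exact hc ⟨by simp only [hJ]; exact Fin.ext hh, hlt⟩
            omega
        · omega
      exact if_congr h2 rfl rfl

/-- Odd step `m = 2 j₀ + 1 → m + 2`: add the diagonal entry `ψ_{t_{j₀}, t_{j₀}}(x_k)` by
conditioning at time `t_{j₀}` with zero time increment. -/
lemma gfam_step_odd {Ω : Type*} [MeasurableSpace Ω] (μ : Measure Ω) [IsProbabilityMeasure μ]
    [∀ n t, IsMarkovKernel (K n t)]
    (ψ : ℝ → ℝ → Ω → ℝ → ℝ) (hψ : IsStochasticFlow μ K ψ)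
    {n l : ℕ} (t : Fin n → ℝ) (ht : Monotone t) (x : Fin l → ℝ)
    (j₀ : ℕ) (hjn : j₀ < n) (hl : 0 < l) :
    μ.map (gfam ψ n l t x (2 * j₀ + 2)) =
      stepCore K n l
        (fun _ a => x (finProdFinEquiv.symm a).2)
        (t ⟨j₀, hjn⟩ - t ⟨j₀, hjn⟩)
        (fun p i j k => if i = j ∧ j = (⟨j₀, hjn⟩ : Fin n)
          then p.2 (finProdFinEquiv (i, k)) else p.1 i j k)
        (μ.map (gfam ψ n l t x (2 * j₀ + 1))) := by
  set J : Fin n := ⟨j₀, hjn⟩ with hJ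
  refine stepCore_eq hψ (Nat.mul_pos (by omega) hl) le_rfl ?_ measurable_const ?_ ?_
  · refine measurable_gfam_past t x _ fun i j hcond hij => ⟨ht hij, ht ?_⟩
    simp only [hJ, Fin.le_def]
    omega
  · refine measurable_pi_lambda _ fun i => measurable_pi_lambda _ fun j =>
      measurable_pi_lambda _ fun k => ?_
    by_cases h : i = j ∧ j = J
    · have he : (fun p : StochFlowAux.Fam n l × (Fin (n * l) → ℝ) =>
          if i = j ∧ j = J then p.2 (finProdFinEquiv (i, k)) else p.1 i j k)
          = fun p => p.2 (finProdFinEquiv (i, k)) := funext fun p => if_pos h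
      rw [he]
      exact (measurable_pi_apply _).comp measurable_snd
    · have he : (fun p : StochFlowAux.Fam n l × (Fin (n * l) → ℝ) =>
          if i = j ∧ j = J then p.2 (finProdFinEquiv (i, k)) else p.1 i j k)
          = fun p => p.1 i j k := funext fun p => if_neg h
      rw [he]
      exact measurable_fst.eval.eval.eval
  · filter_upwards with ω
    funext i j k
    simp only [gfam, Equiv.symm_apply_apply]
    by_cases hc : i = j ∧ j = J
    · obtain ⟨hij, hj⟩ := hc
      rw [if_pos ⟨by simp only [hij, if_true]; subst hj; simp only [hJ]; omega, le_of_eq hij⟩]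
      rw [if_pos ⟨hij, hj⟩, hij, hj]
    · rw [if_neg hc]
      have h2 : (2 * (j : ℕ) + (if i = j then 1 else 0) < 2 * j₀ + 2 ∧ i ≤ j)
          ↔ (2 * (j : ℕ) + (if i = j then 1 else 0) < 2 * j₀ + 1 ∧ i ≤ j) := by
        constructor <;> rintro ⟨h1, hij⟩ <;> refine ⟨?_, hij⟩
        · by_cases hij2 : i = j
          · simp only [hij2, if_true] at h1 ⊢
            have : (j : ℕ) ≠ j₀ := by
              intro hh
              exact hc ⟨hij2, by simp only [hJ]; exact Fin.ext hh⟩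
            omega
          · simp only [hij2, if_false] at h1 ⊢
            omega
        · omega
      exact if_congr h2 rfl rfl

end Steps

/-- two stochastic flows of mappings generated by the same transition
kernels have the same finite-dimensional distributions: for all times
`t₁ ≤ … ≤ tₙ` and points `x₁,…,x_l`, the joint law of the family
`(ψ_{t_i,t_j}(x_k))_{i<j,k}` is the same for both flows. -/
theorem stochastic_flow_fdd_unique
    {Ω : Type*} [MeasurableSpace Ω] (μ : Measure Ω) [IsProbabilityMeasure μ]
    {Ω' : Type*} [MeasurableSpace Ω'] (μ' : Measure Ω') [IsProbabilityMeasure μ']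
    (K : (n : ℕ) → ℝ → Kernel (Fin n → ℝ) (Fin n → ℝ))
    [∀ n t, IsMarkovKernel (K n t)]
    (ψ : ℝ → ℝ → Ω → ℝ → ℝ) (ψ' : ℝ → ℝ → Ω' → ℝ → ℝ)
    (hψ : IsStochasticFlow μ K ψ) (hψ' : IsStochasticFlow μ' K ψ') :
    ∀ (n l : ℕ) (t : Fin n → ℝ), Monotone t → ∀ x : Fin l → ℝ,
      Measure.map (fun ω (q : {ij : Fin n × Fin n // ij.1 < ij.2} × Fin l) =>
        ψ (t q.1.1.1) (t q.1.1.2) ω (x q.2)) μ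
      = Measure.map (fun ω (q : {ij : Fin n × Fin n // ij.1 < ij.2} × Fin l) =>
        ψ' (t q.1.1.1) (t q.1.1.2) ω (x q.2)) μ' := by
  intro n l t ht x
  -- main induction on the step counter
  have main : ∀ m : ℕ, μ.map (gfam ψ n l t x m) = μ'.map (gfam ψ' n l t x m) := by
    intro m
    induction m with
    | zero =>
      have h0 : gfam ψ n l t x 0 = fun _ => (fun _ _ _ => (0 : ℝ)) := by
        funext ω i j k; simp [gfam]
      have h0' : gfam ψ' n l t x 0 = fun _ => (fun _ _ _ => (0 : ℝ)) := by
        funext ω i j k; simp [gfam]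
      rw [h0, h0', Measure.map_const, Measure.map_const, measure_univ, measure_univ]
    | succ m IH =>
      by_cases hl : 0 < l
      · rcases Nat.even_or_odd m with he | ho
        · obtain ⟨j₀, hm⟩ := he
          have hm2 : m = 2 * j₀ := by omega
          subst hm2
          by_cases hj : 0 < j₀ ∧ j₀ < n
          · rw [gfam_step_even μ ψ hψ t ht x j₀ hj.1 hj.2 hl,
              gfam_step_even μ' ψ' hψ' t ht x j₀ hj.1 hj.2 hl, IH]
          · have harg : ∀ i j : Fin n, i ≤ j →
                2 * (j : ℕ) + (if i = j then 1 else 0) ≠ 2 * j₀ := by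
              intro i j hij
              by_cases hij2 : i = j
              · simp only [hij2, if_true]
                omega
              · simp only [hij2, if_false]
                intro hEq
                have hlt : i < j := lt_of_le_of_ne hij hij2
                have h1 : 1 ≤ (j : ℕ) := by
                  have := Fin.lt_def.mp hlt
                  omega
                have h2 := j.isLt
                exact hj ⟨by omega, by omega⟩
            rw [gfam_succ_eq ψ n l t x _ harg, gfam_succ_eq ψ' n l t x _ harg, IH]
        · obtain ⟨j₀, hm⟩ := ho
          subst hm
          by_cases hj : j₀ < n
          · have hgoal : 2 * j₀ + 1 + 1 = 2 * j₀ + 2 := rfl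
            rw [hgoal, gfam_step_odd μ ψ hψ t ht x j₀ hj hl,
              gfam_step_odd μ' ψ' hψ' t ht x j₀ hj hl, IH]
          · have harg : ∀ i j : Fin n, i ≤ j →
                2 * (j : ℕ) + (if i = j then 1 else 0) ≠ 2 * j₀ + 1 := by
              intro i j hij
              by_cases hij2 : i = j
              · simp only [hij2, if_true]
                intro hEq
                have h2 := j.isLt
                omega
              · simp only [hij2, if_false]
                omega
            rw [gfam_succ_eq ψ n l t x _ harg, gfam_succ_eq ψ' n l t x _ harg, IH]
      · -- l = 0 : no points, the families are trivially equal
        have h1 : gfam ψ n l t x (m + 1) = gfam ψ n l t x m := by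
          funext ω i j k
          exact absurd k.isLt (by omega)
        have h1' : gfam ψ' n l t x (m + 1) = gfam ψ' n l t x m := by
          funext ω i j k
          exact absurd k.isLt (by omega)
        rw [h1, h1', IH]
  -- reindexing: the target family is a measurable function of `gfam _ (2n)`
  have hπ : Measurable (fun (e : StochFlowAux.Fam n l)
      (q : {ij : Fin n × Fin n // ij.1 < ij.2} × Fin l) => e q.1.1.1 q.1.1.2 q.2) :=
    measurable_pi_lambda _ fun q =>
      (measurable_pi_apply _).comp ((measurable_pi_apply _).comp (measurable_pi_apply _))
  have hfin : (fun ω (q : {ij : Fin n × Fin n // ij.1 < ij.2} × Fin l) =>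
      ψ (t q.1.1.1) (t q.1.1.2) ω (x q.2))
      = (fun (e : StochFlowAux.Fam n l) (q : {ij : Fin n × Fin n // ij.1 < ij.2} × Fin l) =>
          e q.1.1.1 q.1.1.2 q.2) ∘ (gfam ψ n l t x (2 * n)) := by
    funext ω q
    simp only [Function.comp_apply, gfam]
    have hne : q.1.1.1 ≠ q.1.1.2 := Fin.ne_of_lt q.1.2
    rw [if_pos ⟨by simp only [hne, if_false]; have := q.1.1.2.isLt; omega, le_of_lt q.1.2⟩]
  have hfin' : (fun ω (q : {ij : Fin n × Fin n // ij.1 < ij.2} × Fin l) =>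
      ψ' (t q.1.1.1) (t q.1.1.2) ω (x q.2))
      = (fun (e : StochFlowAux.Fam n l) (q : {ij : Fin n × Fin n // ij.1 < ij.2} × Fin l) =>
          e q.1.1.1 q.1.1.2 q.2) ∘ (gfam ψ' n l t x (2 * n)) := by
    funext ω q
    simp only [Function.comp_apply, gfam]
    have hne : q.1.1.1 ≠ q.1.1.2 := Fin.ne_of_lt q.1.2
    rw [if_pos ⟨by simp only [hne, if_false]; have := q.1.1.2.isLt; omega, le_of_lt q.1.2⟩]
  rw [hfin, hfin', ← Measure.map_map hπ (measurable_gfam hψ ht x (2 * n)),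
    ← Measure.map_map hπ (measurable_gfam hψ' ht x (2 * n)), main (2 * n)]
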